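/- arXiv:1303.5930 — 2 statements merged into one kernel-verified Lean document; each statement's English description precedes it below -/
import Mathlib

section
/- Let 0 = x_0 < x_1 < ⋯ < x_{J+1} = 1 be a partition of [0,1], r ≥ 1 an integer, and let V_r^h be the space of continuous functions v : [0,1] → ℝ that restrict to a polynomial of degree at most r on each subinterval [x_j, x_{j+1}] and satisfy v(0) = v(1). Let δ ≥ 0, τ > 0 and 0 ≤ ε ≤ √2. Suppose u, w ∈ V_r^h and ξ ∈ ℝ satisfy, for every v ∈ V_r^h, (w, v)_I + τ(δ + ε²/2)(∂ₓw, ∂ₓv)_I + τ(1 − ε²/2)(arctan(∂ₓw), ∂ₓv)_I = (u, v)_I + ε(√(1+|∂ₓu|²), v)_I·ξ. Then ½‖w‖²_{L²(I)} − ½‖u‖²_{L²(I)} + τ(δ + ε²/2)‖∂ₓw‖²_{L²(I)} ≤ ε(√(1+|∂ₓu|²), u)_I·ξ + (ε²/2)(1 + ‖∂ₓu‖²_{L²(I)})·ξ². -/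
/-- Membership in the finite element space `V_r^h` of continuous piecewise
polynomials of degree at most `r` on the partition `0 = x_0 < ⋯ < x_{J+1} = 1`
satisfying the periodicity condition `v 0 = v 1`. -/
def IsFE (J r : ℕ) (x : Fin (J + 2) → ℝ) (v : ℝ → ℝ) : Prop :=
  ContinuousOn v (Set.Icc 0 1) ∧ v 0 = v 1 ∧
    ∀ j : Fin (J + 1), ∃ p : Polynomial ℝ, p.natDegree ≤ r ∧
      ∀ t ∈ Set.Icc (x j.castSucc) (x j.succ), v t = Polynomial.eval t p

open MeasureTheory Set intervalIntegral

lemma fe_deriv_eq (J r : ℕ) (x : Fin (J + 2) → ℝ) (v : ℝ → ℝ)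
    (hv : IsFE J r x v) (j : Fin (J + 1)) :
    ∃ q : Polynomial ℝ, ∀ t ∈ Set.Ioo (x j.castSucc) (x j.succ),
      deriv v t = q.eval t := by
  obtain ⟨p, -, hp⟩ := hv.2.2 j
  refine ⟨p.derivative, fun t ht => ?_⟩
  have hev : v =ᶠ[nhds t] fun s => p.eval s := by
    filter_upwards [isOpen_Ioo.mem_nhds ht] with s hs
    exact hp s (Set.Ioo_subset_Icc_self hs)
  rw [hev.deriv_eq, Polynomial.deriv]

lemma fe_integrable (J r : ℕ) (x : Fin (J + 2) → ℝ)
    (hmono : StrictMono x) (hx0 : x 0 = 0) (hx1 : x (Fin.last (J + 1)) = 1)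
    (v : ℝ → ℝ) (hv : IsFE J r x v) (Φ : ℝ → ℝ → ℝ)
    (hΦ : ∀ q : Polynomial ℝ, ContinuousOn (fun t => Φ t (q.eval t)) (Set.Icc 0 1)) :
    IntervalIntegrable (fun t => Φ t (deriv v t)) volume 0 1 := by
  have hx : ∀ k : Fin (J + 2), x k ∈ Set.Icc (0 : ℝ) 1 := by
    intro k
    exact ⟨hx0 ▸ hmono.monotone (Fin.zero_le k), hx1 ▸ hmono.monotone (Fin.le_last k)⟩
  set a : ℕ → ℝ := fun k => x ⟨min k (J + 1), by omega⟩ with ha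
  have h0 : a 0 = 0 := by
    have e0 : (⟨min 0 (J+1), by omega⟩ : Fin (J+2)) = 0 := by ext; simp
    exact (congrArg x e0).trans hx0
  have h1 : a (J + 1) = 1 := by
    have e1 : (⟨min (J+1) (J+1), by omega⟩ : Fin (J+2)) = Fin.last (J+1) := by
      ext; simp [Fin.last]
    exact (congrArg x e1).trans hx1
  have key : ∀ k < J + 1, IntervalIntegrable (fun t => Φ t (deriv v t)) volume (a k) (a (k + 1)) := by
    intro k hk
    set j : Fin (J + 1) := ⟨k, hk⟩ with hj
    have e1 : a k = x j.castSucc := by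
      apply congrArg x; ext; simp [ha, hj]; omega
    have e2 : a (k + 1) = x j.succ := by
      apply congrArg x; ext; simp [ha, hj]; omega
    rw [e1, e2]
    obtain ⟨q, hq⟩ := fe_deriv_eq J r x v hv j
    have hab : x j.castSucc ≤ x j.succ := (hmono (Fin.castSucc_lt_succ (i := j))).le
    rw [intervalIntegrable_iff, Set.uIoc_of_le hab]
    have hsub : Set.Icc (x j.castSucc) (x j.succ) ⊆ Set.Icc (0:ℝ) 1 := by
      intro t ht
      exact ⟨(hx j.castSucc).1.trans ht.1, ht.2.trans (hx j.succ).2⟩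
    have hcont : IntegrableOn (fun t => Φ t (q.eval t))
        (Set.Ioo (x j.castSucc) (x j.succ)) volume :=
      (((hΦ q).mono hsub).integrableOn_Icc).mono_set Set.Ioo_subset_Icc_self
    have hIoo : IntegrableOn (fun t => Φ t (deriv v t))
        (Set.Ioo (x j.castSucc) (x j.succ)) volume := by
      refine hcont.congr_fun (fun t ht => ?_) measurableSet_Ioo
      rw [hq t ht]
    exact hIoo.congr_set_ae Ioo_ae_eq_Ioc.symm
  have := IntervalIntegrable.trans_iterate key
  rwa [h0, h1] at this

/-- Pathwise one-step energy inequality for the fully discrete scheme: if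
`w ∈ V_r^h` solves one step of the scheme with data `u ∈ V_r^h` and increment
`ξ ∈ ℝ`, then
`½‖w‖² − ½‖u‖² + τ(δ+ε²/2)‖∂ₓw‖² ≤ ε(√(1+|∂ₓu|²), u)_I ξ + (ε²/2)(1+‖∂ₓu‖²)ξ²`. -/
theorem one_step_energy_inequality
    (J r : ℕ) (hr : 1 ≤ r) (x : Fin (J + 2) → ℝ)
    (hmono : StrictMono x) (hx0 : x 0 = 0) (hx1 : x (Fin.last (J + 1)) = 1)
    (δ τ ε : ℝ) (hδ : 0 ≤ δ) (hτ : 0 < τ) (hε : 0 ≤ ε) (hε2 : ε ≤ Real.sqrt 2)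
    (u w : ℝ → ℝ) (hu : IsFE J r x u) (hw : IsFE J r x w) (ξ : ℝ)
    (hstep : ∀ v : ℝ → ℝ, IsFE J r x v →
      (∫ t in (0:ℝ)..1, w t * v t)
        + τ * (δ + ε ^ 2 / 2) * (∫ t in (0:ℝ)..1, deriv w t * deriv v t)
        + τ * (1 - ε ^ 2 / 2) *
            (∫ t in (0:ℝ)..1, Real.arctan (deriv w t) * deriv v t)
      = (∫ t in (0:ℝ)..1, u t * v t)
          + ε * (∫ t in (0:ℝ)..1, Real.sqrt (1 + (deriv u t) ^ 2) * v t) * ξ) :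
    (1 / 2) * (∫ t in (0:ℝ)..1, (w t) ^ 2)
        - (1 / 2) * (∫ t in (0:ℝ)..1, (u t) ^ 2)
        + τ * (δ + ε ^ 2 / 2) * (∫ t in (0:ℝ)..1, (deriv w t) ^ 2)
      ≤ ε * (∫ t in (0:ℝ)..1, Real.sqrt (1 + (deriv u t) ^ 2) * u t) * ξ
        + (ε ^ 2 / 2) * (1 + ∫ t in (0:ℝ)..1, (deriv u t) ^ 2) * ξ ^ 2 := by
  have huIcc : Set.uIcc (0:ℝ) 1 = Set.Icc 0 1 := Set.uIcc_of_le zero_le_one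
  -- continuity-based integrabilities
  have int_u2 : IntervalIntegrable (fun t => (u t) ^ 2) volume 0 1 := by
    apply ContinuousOn.intervalIntegrable; rw [huIcc]; exact hu.1.pow 2
  have int_w2 : IntervalIntegrable (fun t => (w t) ^ 2) volume 0 1 := by
    apply ContinuousOn.intervalIntegrable; rw [huIcc]; exact hw.1.pow 2
  have int_uw : IntervalIntegrable (fun t => u t * w t) volume 0 1 := by
    apply ContinuousOn.intervalIntegrable; rw [huIcc]; exact hu.1.mul hw.1
  have int_h2 : IntervalIntegrable (fun t => (w t - u t) ^ 2) volume 0 1 := by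
    apply ContinuousOn.intervalIntegrable; rw [huIcc]; exact (hw.1.sub hu.1).pow 2
  -- deriv-based integrabilities
  have csqrt : ∀ q : Polynomial ℝ,
      Continuous (fun t : ℝ => Real.sqrt (1 + (q.eval t) ^ 2)) := fun q =>
    Real.continuous_sqrt.comp (continuous_const.add (q.continuous.pow 2))
  have int_fu : IntervalIntegrable
      (fun t => Real.sqrt (1 + (deriv u t) ^ 2) * u t) volume 0 1 :=
    fe_integrable J r x hmono hx0 hx1 u hu
      (fun t y => Real.sqrt (1 + y ^ 2) * u t)
      (fun q => ((csqrt q).continuousOn).mul hu.1)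
  have int_fh : IntervalIntegrable
      (fun t => Real.sqrt (1 + (deriv u t) ^ 2) * (w t - u t)) volume 0 1 :=
    fe_integrable J r x hmono hx0 hx1 u hu
      (fun t y => Real.sqrt (1 + y ^ 2) * (w t - u t))
      (fun q => ((csqrt q).continuousOn).mul (hw.1.sub hu.1))
  have int_d2 : IntervalIntegrable (fun t => (deriv u t) ^ 2) volume 0 1 :=
    fe_integrable J r x hmono hx0 hx1 u hu (fun _ y => y ^ 2)
      (fun q => (q.continuous.pow 2).continuousOn)
  have int_1d2 : IntervalIntegrable (fun t => 1 + (deriv u t) ^ 2) volume 0 1 :=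
    intervalIntegrable_const.add int_d2
  -- the equation tested with v = w
  have hW := hstep w hw
  rw [show (∫ t in (0:ℝ)..1, w t * w t) = ∫ t in (0:ℝ)..1, (w t) ^ 2 by simp [sq],
      show (∫ t in (0:ℝ)..1, deriv w t * deriv w t)
        = ∫ t in (0:ℝ)..1, (deriv w t) ^ 2 by simp [sq]] at hW
  -- nonnegativity of the arctan term
  have hAat : 0 ≤ ∫ t in (0:ℝ)..1, Real.arctan (deriv w t) * deriv w t := by
    apply intervalIntegral.integral_nonneg zero_le_one
    intro t _
    rcases le_total 0 (deriv w t) with h | h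
    · have : 0 ≤ Real.arctan (deriv w t) := by
        rw [← Real.arctan_zero]; exact Real.arctan_strictMono.monotone h
      exact mul_nonneg this h
    · have : Real.arctan (deriv w t) ≤ 0 := by
        rw [← Real.arctan_zero]; exact Real.arctan_strictMono.monotone h
      nlinarith
  -- split ∫ f w = ∫ f u + ∫ f (w - u)
  have hF : (∫ t in (0:ℝ)..1, Real.sqrt (1 + (deriv u t) ^ 2) * w t)
      = (∫ t in (0:ℝ)..1, Real.sqrt (1 + (deriv u t) ^ 2) * u t)
        + ∫ t in (0:ℝ)..1, Real.sqrt (1 + (deriv u t) ^ 2) * (w t - u t) := by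
    rw [← intervalIntegral.integral_add int_fu int_fh]
    apply intervalIntegral.integral_congr
    intro t _; simp; ring
  -- ∫ (w-u)² + 2∫ u w = ∫ w² + ∫ u²
  have hS : (∫ t in (0:ℝ)..1, (w t - u t) ^ 2) + 2 * (∫ t in (0:ℝ)..1, u t * w t)
      = (∫ t in (0:ℝ)..1, (w t) ^ 2) + ∫ t in (0:ℝ)..1, (u t) ^ 2 := by
    have h1 : (∫ t in (0:ℝ)..1, ((w t - u t) ^ 2 + 2 * (u t * w t)))
        = ∫ t in (0:ℝ)..1, ((w t) ^ 2 + (u t) ^ 2) := by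
      apply intervalIntegral.integral_congr
      intro t _; simp; ring
    rw [intervalIntegral.integral_add int_h2 (int_uw.const_mul 2),
        intervalIntegral.integral_add int_w2 int_u2,
        intervalIntegral.integral_const_mul] at h1
    linarith
  -- ∫ 1 + d² = 1 + ∫ d²
  have h1d2 : (∫ t in (0:ℝ)..1, (1 + (deriv u t) ^ 2))
      = 1 + ∫ t in (0:ℝ)..1, (deriv u t) ^ 2 := by
    rw [intervalIntegral.integral_add intervalIntegrable_const int_d2]
    simp
  -- weighted Young inequality for the noise cross term
  have hbound : (ε * ξ) * (∫ t in (0:ℝ)..1, Real.sqrt (1 + (deriv u t) ^ 2) * (w t - u t))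
      ≤ (1/2) * (∫ t in (0:ℝ)..1, (w t - u t) ^ 2)
        + ((ε * ξ) ^ 2 / 2) * (1 + ∫ t in (0:ℝ)..1, (deriv u t) ^ 2) := by
    have hmono2 : (∫ t in (0:ℝ)..1,
          (ε * ξ) * (Real.sqrt (1 + (deriv u t) ^ 2) * (w t - u t)))
        ≤ ∫ t in (0:ℝ)..1,
          ((1/2) * (w t - u t) ^ 2 + ((ε * ξ) ^ 2 / 2) * (1 + (deriv u t) ^ 2)) := by
      apply intervalIntegral.integral_mono_on zero_le_one
        (int_fh.const_mul (ε * ξ))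
        ((int_h2.const_mul (1/2)).add (int_1d2.const_mul ((ε * ξ) ^ 2 / 2)))
      intro t _
      have hsq : Real.sqrt (1 + (deriv u t) ^ 2) ^ 2 = 1 + (deriv u t) ^ 2 :=
        Real.sq_sqrt (by positivity)
      nlinarith [sq_nonneg ((w t - u t) - (ε * ξ) * Real.sqrt (1 + (deriv u t) ^ 2))]
    rw [intervalIntegral.integral_const_mul,
        intervalIntegral.integral_add (int_h2.const_mul (1/2))
          (int_1d2.const_mul ((ε * ξ) ^ 2 / 2)),
        intervalIntegral.integral_const_mul, intervalIntegral.integral_const_mul,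
        h1d2] at hmono2
    exact hmono2
  -- sign facts
  have hε2' : ε ^ 2 ≤ 2 := by
    nlinarith [Real.sq_sqrt (by norm_num : (0:ℝ) ≤ 2), Real.sqrt_nonneg 2]
  have hAat' : 0 ≤ τ * (1 - ε ^ 2 / 2)
      * ∫ t in (0:ℝ)..1, Real.arctan (deriv w t) * deriv w t :=
    mul_nonneg (mul_nonneg hτ.le (by linarith)) hAat
  have hrg : ((ε * ξ) ^ 2 / 2) * (1 + ∫ t in (0:ℝ)..1, (deriv u t) ^ 2)
      = (ε ^ 2 / 2) * (1 + ∫ t in (0:ℝ)..1, (deriv u t) ^ 2) * ξ ^ 2 := by ring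
  have hrg2 : ε * ((∫ t in (0:ℝ)..1, Real.sqrt (1 + (deriv u t) ^ 2) * u t)
        + ∫ t in (0:ℝ)..1, Real.sqrt (1 + (deriv u t) ^ 2) * (w t - u t)) * ξ
      = ε * (∫ t in (0:ℝ)..1, Real.sqrt (1 + (deriv u t) ^ 2) * u t) * ξ
        + (ε * ξ) * (∫ t in (0:ℝ)..1, Real.sqrt (1 + (deriv u t) ^ 2) * (w t - u t)) := by
    ring
  rw [hF, hrg2] at hW
  linarith
end

section
/- Let 0 = x_0 < x_1 < ⋯ < x_{J+1} = 1 be a partition of [0,1], r ≥ 1 an integer, and let V_r^h be the space of continuous functions v : [0,1] → ℝ that restrict to a polynomial of degree at most r on each subinterval [x_j, x_{j+1}] and satisfy v(0) = v(1). Let w : [0,1] → ℝ be twice continuously differentiable with w(0) = w(1) and w′(0) = w′(1). Let z ∈ V_r^h be the elliptic projection of w, i.e. the unique element of V_r^h satisfying (∂ₓz − w′, ∂ₓv)_I + (z − w, v)_I = 0 for all v ∈ V_r^h, and let ∂²_h z ∈ V_r^h be the discrete Laplacian of z, i.e. the unique element of V_r^h satisfying (∂²_h z, v)_I = −(∂ₓz,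 ∂ₓv)_I for all v ∈ V_r^h. Then ‖∂²_h z‖_{L²(I)} ≤ ‖w″‖_{L²(I)} + ‖w − z‖_{L²(I)}. -/
open MeasureTheory Set

lemma ae_eq_restrict_Ioc_of_eqOn_Ioo' {a b : ℝ} {f g : ℝ → ℝ}
    (h : ∀ t ∈ Set.Ioo a b, f t = g t) :
    f =ᵐ[volume.restrict (Set.Ioc a b)] g := by
  have h1 : volume.restrict (Set.Ioc a b) = volume.restrict (Set.Ioo a b) :=
    (Measure.restrict_congr_set Ioo_ae_eq_Ioc).symm
  rw [h1]
  exact (ae_restrict_iff' measurableSet_Ioo).2 (Filter.Eventually.of_forall h)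

lemma intervalIntegrable_of_eqOn_Ioo' {a b : ℝ} (hab : a ≤ b) {f g : ℝ → ℝ}
    (h : ∀ t ∈ Set.Ioo a b, f t = g t)
    (hg : IntervalIntegrable g volume a b) : IntervalIntegrable f volume a b := by
  rw [intervalIntegrable_iff_integrableOn_Ioc_of_le hab] at hg ⊢
  exact hg.congr (ae_eq_restrict_Ioc_of_eqOn_Ioo' h).symm

lemma integral_eq_of_eqOn_Ioo' {a b : ℝ} (hab : a ≤ b) {f g : ℝ → ℝ}
    (h : ∀ t ∈ Set.Ioo a b, f t = g t) :
    ∫ t in a..b, f t = ∫ t in a..b, g t := by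
  rw [intervalIntegral.integral_of_le hab, intervalIntegral.integral_of_le hab]
  exact integral_congr_ae (ae_eq_restrict_Ioc_of_eqOn_Ioo' h)

lemma intervalIntegrable_glue' (f : ℝ → ℝ) (a : ℕ → ℝ) :
    ∀ n, (∀ i < n, IntervalIntegrable f volume (a i) (a (i+1))) →
      IntervalIntegrable f volume (a 0) (a n) := by
  intro n
  induction n with
  | zero => intro _; exact IntervalIntegrable.refl
  | succ n ih =>
    intro h
    exact (ih fun i hi => h i (by omega)).trans (h n (by omega))

lemma FE_piece' (J r : ℕ) (x : Fin (J+2) → ℝ) {v : ℝ → ℝ}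
    (hv : ∀ j : Fin (J + 1), ∃ p : Polynomial ℝ, p.natDegree ≤ r ∧
      ∀ t ∈ Set.Icc (x j.castSucc) (x j.succ), v t = Polynomial.eval t p)
    (j : Fin (J+1)) :
    ∃ p : Polynomial ℝ, (∀ t ∈ Set.Icc (x j.castSucc) (x j.succ), v t = p.eval t) ∧
      (∀ t ∈ Set.Ioo (x j.castSucc) (x j.succ), deriv v t = p.derivative.eval t) := by
  obtain ⟨p, -, hp⟩ := hv j
  refine ⟨p, fun t ht => by rw [hp t ht, Polynomial.eval], fun t ht => ?_⟩
  have hev : v =ᶠ[nhds t] fun s => p.eval s :=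
    Filter.eventuallyEq_of_mem (Ioo_mem_nhds ht.1 ht.2)
      (fun s hs => hp s (Set.Ioo_subset_Icc_self hs))
  rw [hev.deriv_eq, Polynomial.deriv]

lemma cs_int' {f g : ℝ → ℝ} (hf : ContinuousOn f (Set.Icc 0 1))
    (hg : ContinuousOn g (Set.Icc 0 1)) :
    ∫ t in (0:ℝ)..1, f t * g t
      ≤ Real.sqrt (∫ t in (0:ℝ)..1, f t ^ 2) * Real.sqrt (∫ t in (0:ℝ)..1, g t ^ 2) := by
  have h01 : (0:ℝ) ≤ 1 := by norm_num
  have huIcc : Set.uIcc (0:ℝ) 1 = Set.Icc 0 1 := Set.uIcc_of_le h01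
  have hfg : IntervalIntegrable (fun t => f t * g t) volume 0 1 :=
    ContinuousOn.intervalIntegrable (by rw [huIcc]; exact hf.mul hg)
  have hf2 : IntervalIntegrable (fun t => f t ^ 2) volume 0 1 :=
    ContinuousOn.intervalIntegrable (by rw [huIcc]; exact hf.pow 2)
  have hg2 : IntervalIntegrable (fun t => g t ^ 2) volume 0 1 :=
    ContinuousOn.intervalIntegrable (by rw [huIcc]; exact hg.pow 2)
  set A := ∫ t in (0:ℝ)..1, f t ^ 2 with hAdef
  set B := ∫ t in (0:ℝ)..1, g t ^ 2 with hBdef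
  set S := ∫ t in (0:ℝ)..1, f t * g t with hSdef
  have hA0 : 0 ≤ A := intervalIntegral.integral_nonneg h01 fun t _ => sq_nonneg _
  have hB0 : 0 ≤ B := intervalIntegral.integral_nonneg h01 fun t _ => sq_nonneg _
  by_cases hB : B = 0
  · have hBi : IntegrableOn (fun t => g t ^ 2) (Set.Ioc (0:ℝ) 1) volume :=
      (intervalIntegrable_iff_integrableOn_Ioc_of_le h01).1 hg2
    have hB' : ∫ t in Set.Ioc (0:ℝ) 1, g t ^ 2 = 0 := by
      rw [← intervalIntegral.integral_of_le h01]; exact hB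
    have hzero := (integral_eq_zero_iff_of_nonneg_ae
      (Filter.Eventually.of_forall fun t => sq_nonneg (g t)) hBi).1 hB'
    have hae : (fun t => f t * g t) =ᵐ[volume.restrict (Set.Ioc (0:ℝ) 1)] 0 := by
      filter_upwards [hzero] with t ht
      have hgt : g t = 0 := by
        have : g t ^ 2 = 0 := ht
        exact pow_eq_zero_iff (by norm_num) |>.1 this
      simp [hgt]
    have hS : S = 0 := by
      rw [hSdef, intervalIntegral.integral_of_le h01, integral_congr_ae hae]; simp
    rw [hS]
    positivity
  · have hBpos : 0 < B := lt_of_le_of_ne hB0 (Ne.symm hB)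
    set c := S / B with hcdef
    have hc : c * B = S := div_mul_cancel₀ S hB
    have h0 : 0 ≤ ∫ t in (0:ℝ)..1, (f t - c * g t) ^ 2 :=
      intervalIntegral.integral_nonneg h01 fun t _ => sq_nonneg _
    have hexp : ∫ t in (0:ℝ)..1, (f t - c * g t) ^ 2 = A - 2 * c * S + c ^ 2 * B := by
      have heq : (fun t => (f t - c * g t) ^ 2)
          = fun t => (f t ^ 2 - 2 * c * (f t * g t)) + c ^ 2 * g t ^ 2 := by
        funext t; ring
      rw [heq, intervalIntegral.integral_add (hf2.sub (hfg.const_mul _)) (hg2.const_mul _),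
        intervalIntegral.integral_sub hf2 (hfg.const_mul _),
        intervalIntegral.integral_const_mul, intervalIntegral.integral_const_mul]
    have hS2 : S ^ 2 ≤ A * B := by
      rw [hexp] at h0
      nlinarith [hc, hBpos, h0]
    calc S ≤ |S| := le_abs_self S
      _ = Real.sqrt (S ^ 2) := (Real.sqrt_sq_eq_abs S).symm
      _ ≤ Real.sqrt (A * B) := Real.sqrt_le_sqrt hS2
      _ = Real.sqrt A * Real.sqrt B := Real.sqrt_mul hA0 B



/-- `L²`-stability of the discrete Laplacian applied to the elliptic projection
(inequality (3.18)): if `z` is the elliptic projection of a periodic `C²`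
function `w` and `∂²_h z` its discrete Laplacian, then
`‖∂²_h z‖_{L²} ≤ ‖w″‖_{L²} + ‖w − z‖_{L²}`. -/
theorem discrete_laplacian_elliptic_projection_bound
    (J r : ℕ) (hr : 1 ≤ r) (x : Fin (J + 2) → ℝ)
    (hmono : StrictMono x) (hx0 : x 0 = 0) (hx1 : x (Fin.last (J + 1)) = 1)
    (w : ℝ → ℝ) (hw : ContDiff ℝ 2 w) (hwper : w 0 = w 1)
    (hwper' : deriv w 0 = deriv w 1)
    (z : ℝ → ℝ) (hz : IsFE J r x z)
    (hproj : ∀ v : ℝ → ℝ, IsFE J r x v →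
      (∫ t in (0:ℝ)..1, (deriv z t - deriv w t) * deriv v t)
        + (∫ t in (0:ℝ)..1, (z t - w t) * v t) = 0)
    (d2z : ℝ → ℝ) (hd2z : IsFE J r x d2z)
    (hlap : ∀ v : ℝ → ℝ, IsFE J r x v →
      (∫ t in (0:ℝ)..1, d2z t * v t) = -∫ t in (0:ℝ)..1, deriv z t * deriv v t) :
    Real.sqrt (∫ t in (0:ℝ)..1, (d2z t) ^ 2)
      ≤ Real.sqrt (∫ t in (0:ℝ)..1, (deriv (deriv w) t) ^ 2)
        + Real.sqrt (∫ t in (0:ℝ)..1, (w t - z t) ^ 2) := by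
  -- regularity of w
  have hw2 : ContDiff ℝ ((1:ℕ∞) + 1) w := by
    convert hw using 2
    norm_num
  have hw1 : ContDiff ℝ 1 (deriv w) := (contDiff_succ_iff_deriv.mp hw2).2.2
  have hw'cont : Continuous (deriv w) := hw1.continuous
  have hw''cont : Continuous (deriv (deriv w)) := hw1.continuous_deriv le_rfl
  have hw'diff : Differentiable ℝ (deriv w) := hw1.differentiable one_ne_zero
  -- the partition as a ℕ-indexed sequence
  set a : ℕ → ℝ := fun i => x ⟨min i (J+1), by omega⟩ with hadef
  have ha0 : a 0 = 0 := by
    rw [hadef]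
    simpa using hx0
  have haJ : a (J+1) = 1 := by
    rw [hadef]
    simpa [Fin.last] using hx1
  have hale : ∀ i : ℕ, a i ≤ a (i+1) := by
    intro i
    exact hmono.monotone (Fin.mk_le_mk.2 (by omega))
  -- per-piece facts
  have piece : ∀ j : ℕ, j < J + 1 →
      (IntervalIntegrable (fun t => deriv w t * deriv d2z t) volume (a j) (a (j+1))) ∧
      (IntervalIntegrable (fun t => (deriv z t - deriv w t) * deriv d2z t) volume (a j) (a (j+1))) ∧
      (IntervalIntegrable (fun t => deriv (deriv w) t * d2z t) volume (a j) (a (j+1))) ∧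
      ((∫ t in a j..a (j+1), deriv w t * deriv d2z t)
        = deriv w (a (j+1)) * d2z (a (j+1)) - deriv w (a j) * d2z (a j)
          - ∫ t in a j..a (j+1), deriv (deriv w) t * d2z t) := by
    intro j hj
    set jf : Fin (J+1) := ⟨j, hj⟩ with hjf
    have hc : x jf.castSucc = a j := by
      apply congrArg x
      apply Fin.ext
      simp only [hjf, hadef, Fin.coe_castSucc]
      all_goals omega
    have hs : x jf.succ = a (j+1) := by
      apply congrArg x
      apply Fin.ext
      simp only [hjf, hadef, Fin.val_succ]
      all_goals omega
    obtain ⟨q, hq, hq'⟩ := FE_piece' J r x hd2z.2.2 jf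
    obtain ⟨pz, hpz, hpz'⟩ := FE_piece' J r x hz.2.2 jf
    rw [hc, hs] at hq hq' hpz hpz'
    have hab : a j ≤ a (j+1) := hale j
    have huIcc : Set.uIcc (a j) (a (j+1)) = Set.Icc (a j) (a (j+1)) := Set.uIcc_of_le hab
    -- (1)
    have I1 : IntervalIntegrable (fun t => deriv w t * deriv d2z t) volume (a j) (a (j+1)) :=
      intervalIntegrable_of_eqOn_Ioo' hab (fun t ht => by rw [hq' t ht]; rfl)
        ((hw'cont.mul (q.derivative.continuous)).intervalIntegrable _ _)
    -- (2)
    have I2 : IntervalIntegrable (fun t => (deriv z t - deriv w t) * deriv d2z t)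
        volume (a j) (a (j+1)) :=
      intervalIntegrable_of_eqOn_Ioo' hab
        (fun t ht => by rw [hq' t ht, hpz' t ht]; rfl)
        (((pz.derivative.continuous.sub hw'cont).mul
          (q.derivative.continuous)).intervalIntegrable _ _)
    -- (3)
    have I3 : IntervalIntegrable (fun t => deriv (deriv w) t * d2z t) volume (a j) (a (j+1)) :=
      intervalIntegrable_of_eqOn_Ioo' hab
        (fun t ht => by rw [hq t (Set.Ioo_subset_Icc_self ht)]; rfl)
        ((hw''cont.mul q.continuous).intervalIntegrable _ _)
    refine ⟨I1, I2, I3, ?_⟩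
    -- integration by parts on the piece
    have e1 : (∫ t in a j..a (j+1), deriv w t * deriv d2z t)
        = ∫ t in a j..a (j+1), deriv w t * q.derivative.eval t :=
      integral_eq_of_eqOn_Ioo' hab (fun t ht => by rw [hq' t ht])
    have e2 : (∫ t in a j..a (j+1), deriv w t * q.derivative.eval t)
        = deriv w (a (j+1)) * q.eval (a (j+1)) - deriv w (a j) * q.eval (a j)
          - ∫ t in a j..a (j+1), deriv (deriv w) t * q.eval t := by
      apply intervalIntegral.integral_mul_deriv_eq_deriv_mul
        (u := deriv w) (u' := deriv (deriv w)) (v := fun t => q.eval t)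
        (v' := fun t => q.derivative.eval t)
      · exact fun t _ => (hw'diff t).hasDerivAt
      · exact fun t _ => q.hasDerivAt t
      · exact hw''cont.intervalIntegrable _ _
      · exact q.derivative.continuous.intervalIntegrable _ _
    have e3 : (∫ t in a j..a (j+1), deriv (deriv w) t * q.eval t)
        = ∫ t in a j..a (j+1), deriv (deriv w) t * d2z t :=
      integral_eq_of_eqOn_Ioo' hab
        (fun t ht => by rw [hq t (Set.Ioo_subset_Icc_self ht)])
    have hqb : q.eval (a (j+1)) = d2z (a (j+1)) := (hq _ (Set.right_mem_Icc.2 hab)).symm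
    have hqa : q.eval (a j) = d2z (a j) := (hq _ (Set.left_mem_Icc.2 hab)).symm
    rw [e1, e2, e3, hqb, hqa]
  -- glue integrability over [0,1]
  have hIw01 : IntervalIntegrable (fun t => deriv w t * deriv d2z t) volume 0 1 := by
    have := intervalIntegrable_glue' _ a (J+1) (fun i hi => (piece i hi).1)
    rwa [ha0, haJ] at this
  have hIzw01 : IntervalIntegrable (fun t => (deriv z t - deriv w t) * deriv d2z t)
      volume 0 1 := by
    have := intervalIntegrable_glue' _ a (J+1) (fun i hi => (piece i hi).2.1)
    rwa [ha0, haJ] at this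
  -- key identity: ∫ w' (d2z)' = -∫ w'' d2z
  have key1 : (∫ t in (0:ℝ)..1, deriv w t * deriv d2z t)
      = - ∫ t in (0:ℝ)..1, deriv (deriv w) t * d2z t := by
    have h1 : (∫ t in (a 0)..(a (J+1)), deriv w t * deriv d2z t)
        = ∑ j ∈ Finset.range (J+1), ∫ t in a j..a (j+1), deriv w t * deriv d2z t :=
      (intervalIntegral.sum_integral_adjacent_intervals (fun k hk => (piece k hk).1)).symm
    have h3 : (∫ t in (a 0)..(a (J+1)), deriv (deriv w) t * d2z t)
        = ∑ j ∈ Finset.range (J+1), ∫ t in a j..a (j+1), deriv (deriv w) t * d2z t :=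
      (intervalIntegral.sum_integral_adjacent_intervals (fun k hk => (piece k hk).2.2.1)).symm
    have h2 : ∑ j ∈ Finset.range (J+1), (∫ t in a j..a (j+1), deriv w t * deriv d2z t)
        = (∑ j ∈ Finset.range (J+1),
            ((fun i => deriv w (a i) * d2z (a i)) (j+1) - (fun i => deriv w (a i) * d2z (a i)) j))
          - ∑ j ∈ Finset.range (J+1), ∫ t in a j..a (j+1), deriv (deriv w) t * d2z t := by
      rw [← Finset.sum_sub_distrib]
      exact Finset.sum_congr rfl fun j hj => (piece j (Finset.mem_range.1 hj)).2.2.2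
    have htel : ∑ j ∈ Finset.range (J+1),
        ((fun i => deriv w (a i) * d2z (a i)) (j+1) - (fun i => deriv w (a i) * d2z (a i)) j)
        = 0 := by
      rw [Finset.sum_range_sub (f := fun i => deriv w (a i) * d2z (a i))]
      simp only [ha0, haJ, hwper', hd2z.2.1]
      ring
    rw [ha0, haJ] at h1 h3
    rw [h1, h2, htel, ← h3]
    ring
  -- split the projection identity
  have hsplit : (∫ t in (0:ℝ)..1, deriv z t * deriv d2z t)
      = (∫ t in (0:ℝ)..1, (deriv z t - deriv w t) * deriv d2z t)
        + ∫ t in (0:ℝ)..1, deriv w t * deriv d2z t := by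
    rw [← intervalIntegral.integral_add hIzw01 hIw01]
    exact intervalIntegral.integral_congr fun t _ => by ring
  have hlapz := hlap d2z hd2z
  have hprojz := hproj d2z hd2z
  have esq : (∫ t in (0:ℝ)..1, (d2z t) ^ 2) = ∫ t in (0:ℝ)..1, d2z t * d2z t :=
    intervalIntegral.integral_congr fun t _ => by ring
  -- the main identity
  have hA : (∫ t in (0:ℝ)..1, (d2z t) ^ 2)
      = (∫ t in (0:ℝ)..1, (z t - w t) * d2z t)
        + ∫ t in (0:ℝ)..1, deriv (deriv w) t * d2z t := by
    linarith [esq, hlapz, hsplit, hprojz, key1]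
  -- Cauchy–Schwarz estimates
  have hcs1 : (∫ t in (0:ℝ)..1, deriv (deriv w) t * d2z t)
      ≤ Real.sqrt (∫ t in (0:ℝ)..1, (deriv (deriv w) t) ^ 2)
        * Real.sqrt (∫ t in (0:ℝ)..1, (d2z t) ^ 2) :=
    cs_int' hw''cont.continuousOn hd2z.1
  have hcs2 : (∫ t in (0:ℝ)..1, (z t - w t) * d2z t)
      ≤ Real.sqrt (∫ t in (0:ℝ)..1, (z t - w t) ^ 2)
        * Real.sqrt (∫ t in (0:ℝ)..1, (d2z t) ^ 2) :=
    cs_int' (hz.1.sub hw.continuous.continuousOn) hd2z.1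
  have hzw : (∫ t in (0:ℝ)..1, (z t - w t) ^ 2) = ∫ t in (0:ℝ)..1, (w t - z t) ^ 2 :=
    intervalIntegral.integral_congr fun t _ => by ring
  rw [hzw] at hcs2
  set A := ∫ t in (0:ℝ)..1, (d2z t) ^ 2 with hAdef
  set B := Real.sqrt (∫ t in (0:ℝ)..1, (deriv (deriv w) t) ^ 2) with hBdef
  set C := Real.sqrt (∫ t in (0:ℝ)..1, (w t - z t) ^ 2) with hCdef
  have hA0 : 0 ≤ A := intervalIntegral.integral_nonneg (by norm_num) fun t _ => sq_nonneg _
  have hB0 : 0 ≤ B := Real.sqrt_nonneg _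
  have hC0 : 0 ≤ C := Real.sqrt_nonneg _
  have hAle : A ≤ (B + C) * Real.sqrt A := by nlinarith [hA, hcs1, hcs2]
  by_cases hsA : Real.sqrt A = 0
  · rw [hsA]; positivity
  · have hsApos : 0 < Real.sqrt A := lt_of_le_of_ne (Real.sqrt_nonneg A) (Ne.symm hsA)
    have hAs : Real.sqrt A * Real.sqrt A = A := Real.mul_self_sqrt hA0
    nlinarith [hAle, hAs, hsApos]
end
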